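/- Let p = (1, 1) ∈ (0,∞)². Then: (i) the derivative of f at p vanishes (p is a critical point of f, corresponding to the normal Einstein metric on SO(4)/T²); (ii) the second derivative of f at p, viewed as a quadratic form on ℝ², is positive semidefinite with kernel exactly the line ℝ·(1,1); i.e. it has exactly one positive and one zero eigenvalue. In particular, the normal Einstein metric on SO(4)/T² has coindex 1. -/

import Mathlib

noncomputable section

/-- The normalized scalar curvature of invariant metrics on `SO(4)/T² = S² × S²`. -/
def scalSO4 : (Fin 2 → ℝ) → ℝ := fun x =>
  (x 0 * x 1) ^ ((1 : ℝ) / 2) * (1 / x 0 + 1 / x 1)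

/-- The second derivative of `f` at `p`, as a quadratic/bilinear form. -/
def hessSO4 (p v w : Fin 2 → ℝ) : ℝ := iteratedFDeriv ℝ 2 scalSO4 p ![v, w]

namespace SO4aux

def Lp (i : Fin 2) : (Fin 2 → ℝ) →L[ℝ] ℝ := ContinuousLinearMap.proj i

@[simp] lemma Lp_apply (i : Fin 2) (w : Fin 2 → ℝ) : Lp i w = w i := rfl

lemma hpow (i : Fin 2) (r : ℝ) (x : Fin 2 → ℝ) (hx : x i ≠ 0) :
    HasFDerivAt (fun y : Fin 2 → ℝ => y i ^ r) ((r * x i ^ (r - 1)) • Lp i) x := by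
  have := (Real.hasDerivAt_rpow_const (x := x i) (p := r) (Or.inl hx)).comp_hasFDerivAt x (Lp i).hasFDerivAt
  exact this

def g0 (x : Fin 2 → ℝ) : ℝ :=
  (1/2) * (x 0 ^ (-(1/2) : ℝ) * x 1 ^ (-(1/2) : ℝ)) - (1/2) * (x 0 ^ (-(3/2) : ℝ) * x 1 ^ ((1/2) : ℝ))

def g1 (x : Fin 2 → ℝ) : ℝ :=
  (1/2) * (x 0 ^ (-(1/2) : ℝ) * x 1 ^ (-(1/2) : ℝ)) - (1/2) * (x 0 ^ ((1/2) : ℝ) * x 1 ^ (-(3/2) : ℝ))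

def Dmap (x : Fin 2 → ℝ) : (Fin 2 → ℝ) →L[ℝ] ℝ := g0 x • Lp 0 + g1 x • Lp 1

lemma hasFDeriv_scal (x : Fin 2 → ℝ) (h0 : 0 < x 0) (h1 : 0 < x 1) :
    HasFDerivAt scalSO4 (Dmap x) x := by
  have Hf := ((hpow 0 (1/2) x h0.ne').mul (hpow 1 (-(1/2)) x h1.ne')).add
      ((hpow 0 (-(1/2)) x h0.ne').mul (hpow 1 (1/2) x h1.ne'))
  have heq : scalSO4 =ᶠ[nhds x]
      (fun y : Fin 2 → ℝ => y 0 ^ ((1/2) : ℝ) * y 1 ^ (-(1/2) : ℝ)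
        + y 0 ^ (-(1/2) : ℝ) * y 1 ^ ((1/2) : ℝ)) := by
    have m0 : {y : Fin 2 → ℝ | 0 < y 0} ∈ nhds x :=
      (isOpen_lt continuous_const (continuous_apply 0)).mem_nhds h0
    have m1 : {y : Fin 2 → ℝ | 0 < y 1} ∈ nhds x :=
      (isOpen_lt continuous_const (continuous_apply 1)).mem_nhds h1
    filter_upwards [m0, m1] with y hy0 hy1
    have a : y 0 ^ (-(1/2) : ℝ) = y 0 ^ ((1/2) : ℝ) / y 0 := by
      rw [show (-(1/2) : ℝ) = 1/2 - 1 by norm_num, Real.rpow_sub hy0, Real.rpow_one]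
    have b : y 1 ^ (-(1/2) : ℝ) = y 1 ^ ((1/2) : ℝ) / y 1 := by
      rw [show (-(1/2) : ℝ) = 1/2 - 1 by norm_num, Real.rpow_sub hy1, Real.rpow_one]
    simp only [scalSO4, Real.mul_rpow hy0.le hy1.le, a, b]
    ring
  refine (Hf.congr_of_eventuallyEq heq).congr_fderiv ?_
  have e1 : ((1:ℝ)/2 - 1) = (-(1/2) : ℝ) := by norm_num
  have e2 : ((-(1/2):ℝ) - 1) = (-(3/2) : ℝ) := by norm_num
  ext w
  simp [Dmap, g0, g1, e1, e2, smul_smul]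
  ring

def c0 : (Fin 2 → ℝ) →L[ℝ] ℝ := ((1:ℝ)/2) • Lp 0 + (-(1/2) : ℝ) • Lp 1
def c1 : (Fin 2 → ℝ) →L[ℝ] ℝ := (-(1/2) : ℝ) • Lp 0 + ((1:ℝ)/2) • Lp 1

def Emap : (Fin 2 → ℝ) →L[ℝ] ((Fin 2 → ℝ) →L[ℝ] ℝ) :=
  c0.smulRight (Lp 0) + c1.smulRight (Lp 1)

lemma one01 : (0:ℝ) < (![1,1] : Fin 2 → ℝ) 0 := by norm_num
lemma one11 : (0:ℝ) < (![1,1] : Fin 2 → ℝ) 1 := by norm_num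

lemma hg0 : HasFDerivAt g0 c0 ![1,1] := by
  have H := ((((hpow 0 (-(1/2)) ![1,1] one01.ne').mul (hpow 1 (-(1/2)) ![1,1] one11.ne')).const_mul
      ((1:ℝ)/2)).sub (((hpow 0 (-(3/2)) ![1,1] one01.ne').mul
      (hpow 1 ((1/2)) ![1,1] one11.ne')).const_mul ((1:ℝ)/2)))
  refine H.congr_fderiv ?_
  ext w
  simp [c0, Real.one_rpow]
  ring

lemma hg1 : HasFDerivAt g1 c1 ![1,1] := by
  have H := ((((hpow 0 (-(1/2)) ![1,1] one01.ne').mul (hpow 1 (-(1/2)) ![1,1] one11.ne')).const_mul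
      ((1:ℝ)/2)).sub (((hpow 0 ((1/2)) ![1,1] one01.ne').mul
      (hpow 1 (-(3/2)) ![1,1] one11.ne')).const_mul ((1:ℝ)/2)))
  refine H.congr_fderiv ?_
  ext w
  simp [c1, Real.one_rpow]
  ring

lemma hasFDeriv_Dmap : HasFDerivAt Dmap Emap ![1,1] :=
  (hg0.smul_const (Lp 0)).add (hg1.smul_const (Lp 1))

lemma fderiv_eventually : fderiv ℝ scalSO4 =ᶠ[nhds (![1,1] : Fin 2 → ℝ)] Dmap := by
  have m0 : {y : Fin 2 → ℝ | 0 < y 0} ∈ nhds (![1,1] : Fin 2 → ℝ) :=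
    (isOpen_lt continuous_const (continuous_apply 0)).mem_nhds one01
  have m1 : {y : Fin 2 → ℝ | 0 < y 1} ∈ nhds (![1,1] : Fin 2 → ℝ) :=
    (isOpen_lt continuous_const (continuous_apply 1)).mem_nhds one11
  filter_upwards [m0, m1] with y hy0 hy1 using (hasFDeriv_scal y hy0 hy1).fderiv

lemma key (v w : Fin 2 → ℝ) :
    hessSO4 ![1,1] v w = (1/2) * (v 0 - v 1) * (w 0 - w 1) := by
  have h2 : fderiv ℝ (fderiv ℝ scalSO4) ![1,1] = Emap := by
    rw [fderiv_eventually.fderiv_eq, hasFDeriv_Dmap.fderiv]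
  rw [hessSO4, iteratedFDeriv_two_apply, h2]
  simp [Emap, c0, c1]
  ring

end SO4aux

open SO4aux

/-- the normal Einstein metric `p = (1,1)` on `SO(4)/T²` is a critical point
of the normalized scalar curvature `f`, and the second derivative of `f` at `p` is positive
semidefinite with kernel exactly the line `ℝ·(1,1)`; i.e. it has exactly one positive and
one zero eigenvalue. In particular the normal Einstein metric has coindex `1`. -/
theorem normal_SO4_coindex_one :
    ∀ p : Fin 2 → ℝ, p = ![1, 1] →
    HasFDerivAt scalSO4 (0 : (Fin 2 → ℝ) →L[ℝ] ℝ) p ∧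
    ContDiffAt ℝ 2 scalSO4 p ∧
    (∀ v : Fin 2 → ℝ, 0 ≤ hessSO4 p v v) ∧
    (∀ v : Fin 2 → ℝ, (∀ w : Fin 2 → ℝ, hessSO4 p v w = 0) ↔ ∃ t : ℝ, v = t • p) ∧
    (∃ v : Fin 2 → ℝ, 0 < hessSO4 p v v) := by
  rintro p rfl
  refine ⟨?_, ?_, ?_, ?_, ?_⟩
  · have h := hasFDeriv_scal ![1,1] one01 one11
    have hz : Dmap ![1,1] = 0 := by
      ext w
      simp [Dmap, g0, g1, Real.one_rpow]
    rwa [hz] at h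
  · -- ContDiffAt
    have hc0 : ContDiffAt ℝ 2 (fun x : Fin 2 → ℝ => x 0) ![1,1] := (Lp 0).contDiff.contDiffAt
    have hc1 : ContDiffAt ℝ 2 (fun x : Fin 2 → ℝ => x 1) ![1,1] := (Lp 1).contDiff.contDiffAt
    have hmul : ContDiffAt ℝ 2 (fun x : Fin 2 → ℝ => x 0 * x 1) ![1,1] := hc0.mul hc1
    have hrpow : ContDiffAt ℝ 2 (fun t : ℝ => t ^ ((1:ℝ)/2)) ((![1,1] : Fin 2 → ℝ) 0 * (![1,1] : Fin 2 → ℝ) 1) := by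
      apply Real.contDiffAt_rpow_const_of_ne
      norm_num
    have h1 : ContDiffAt ℝ 2 (fun x : Fin 2 → ℝ => (x 0 * x 1) ^ ((1:ℝ)/2)) ![1,1] :=
      ContDiffAt.comp (f := fun x : Fin 2 → ℝ => x 0 * x 1)
        (g := fun t : ℝ => t ^ ((1:ℝ)/2)) ![1,1] hrpow hmul
    have h2 : ContDiffAt ℝ 2 (fun x : Fin 2 → ℝ => 1 / x 0 + 1 / x 1) ![1,1] := by
      have i0 : ContDiffAt ℝ 2 (fun x : Fin 2 → ℝ => (x 0)⁻¹) ![1,1] :=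
        hc0.inv (by norm_num)
      have i1 : ContDiffAt ℝ 2 (fun x : Fin 2 → ℝ => (x 1)⁻¹) ![1,1] :=
        hc1.inv (by norm_num)
      simpa [one_div] using i0.add i1
    exact h1.mul h2
  · intro v
    rw [key]
    nlinarith [sq_nonneg (v 0 - v 1)]
  · intro v
    constructor
    · intro h
      have h1 := h ![1, 0]
      rw [key] at h1
      simp only [Matrix.cons_val_zero, Matrix.cons_val_one, Matrix.head_cons] at h1
      have hv : v 0 = v 1 := by linear_combination 2 * h1
      exact ⟨v 1, by
        funext i
        fin_cases i <;> simp [hv]⟩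
    · rintro ⟨t, rfl⟩ w
      rw [key]
      simp
  · refine ⟨![1, 0], ?_⟩
    rw [key]
    norm_num
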